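/- arXiv:2504.02607 — 3 statements merged into one kernel-verified Lean document; each statement's English description precedes it below -/
import Mathlib

section
/- If A = I - E is a real n×n matrix where every entry of E is bounded in absolute value by ε ≤ 1/n, then det(A) ≥ 1 - nε. -/
open Matrix

lemma ostrowski_key : ∀ (n : ℕ) (ε : ℝ) (B : Matrix (Fin n) (Fin n) ℝ),
    (∀ i j, |B i j| ≤ ε) → (n : ℝ) * ε ≤ 1 → 1 - (n : ℝ) * ε ≤ (1 - B).det := by
  intro n
  induction n with
  | zero =>
    intro ε B _ _
    simp [Matrix.det_fin_zero]
  | succ n ih =>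
    intro ε B hB hnε
    have hε0 : 0 ≤ ε := (abs_nonneg _).trans (hB 0 0)
    rcases Nat.eq_zero_or_pos n with rfl | hn
    · -- size 1
      rw [Matrix.det_fin_one]
      simp only [Matrix.sub_apply, Matrix.one_apply_eq]
      have := (abs_le.mp (hB 0 0)).2
      push_cast
      linarith
    · -- size n+1 with n ≥ 1 : ε ≤ 1/2
      have hε1 : ε < 1 := by
        have : (2 : ℝ) ≤ (n : ℝ) + 1 := by
          have : (1:ℝ) ≤ (n:ℝ) := by exact_mod_cast hn
          linarith
        push_cast at hnε
        nlinarith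
      set e : Fin 1 ⊕ Fin n ≃ Fin (n + 1) :=
        finSumFinEquiv.trans (finCongr (Nat.add_comm 1 n)) with he
      set M : Matrix (Fin (n+1)) (Fin (n+1)) ℝ := 1 - B with hM
      set N := M.submatrix e e with hN
      set i0 : Fin (n+1) := e (Sum.inl 0) with hi0
      have ha : N.toBlocks₁₁ 0 0 = 1 - B i0 i0 := by
        simp [hN, Matrix.toBlocks₁₁, hM, Matrix.sub_apply, Matrix.one_apply_eq, hi0]
      have haval : 1 - ε ≤ 1 - B i0 i0 := by
        have := (abs_le.mp (hB i0 i0)).2; linarith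
      have hapos : (0:ℝ) < 1 - B i0 i0 := by linarith
      have hdetA : N.toBlocks₁₁.det = 1 - B i0 i0 := by
        rw [Matrix.det_fin_one, ha]
      haveI : Invertible N.toBlocks₁₁ :=
        N.toBlocks₁₁.invertibleOfIsUnitDet (by rw [hdetA]; exact (ne_of_gt hapos).isUnit)
      set x : ℝ := (⅟ N.toBlocks₁₁) 0 0 with hx
      have hax : (1 - B i0 i0) * x = 1 := by
        have h1 : (N.toBlocks₁₁ * ⅟ N.toBlocks₁₁) 0 0 = (1 : Matrix (Fin 1) (Fin 1) ℝ) 0 0 := by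
          rw [mul_invOf_self]
        simpa [Matrix.mul_apply, Fin.sum_univ_one, ha, hx, Matrix.one_apply_eq] using h1
      have hxval : x = (1 - B i0 i0)⁻¹ := by
        field_simp at hax ⊢; linarith [hax]
      have hxpos : 0 < x := by rw [hxval]; positivity
      have hxle : x ≤ (1 - ε)⁻¹ := by
        rw [hxval]
        exact inv_anti₀ (by linarith) haval
      -- the Schur complement as 1 - B'
      set B' : Matrix (Fin n) (Fin n) ℝ :=
        Matrix.of (fun i j => B (e (Sum.inr i)) (e (Sum.inr j))
          + B (e (Sum.inr i)) i0 * x * B i0 (e (Sum.inr j))) with hB'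
      have hSchur : N.toBlocks₂₂ - N.toBlocks₂₁ * ⅟ N.toBlocks₁₁ * N.toBlocks₁₂ = 1 - B' := by
        ext i j
        have hne1 : e (Sum.inr i) ≠ i0 := by
          simp only [hi0]; exact fun h => by simpa using e.injective h
        have hne2 : i0 ≠ e (Sum.inr j) := by
          simp only [hi0]; exact fun h => by simpa using e.injective h
        have hdiag : M (e (Sum.inr i)) (e (Sum.inr j))
            = (1 : Matrix (Fin n) (Fin n) ℝ) i j - B (e (Sum.inr i)) (e (Sum.inr j)) := by
          simp only [hM, Matrix.sub_apply]
          congr 1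
          by_cases h : i = j
          · subst h; simp [Matrix.one_apply_eq]
          · rw [Matrix.one_apply_ne, Matrix.one_apply_ne h]
            exact fun hh => h (by simpa using e.injective hh)
        simp only [Matrix.sub_apply, Matrix.toBlocks₂₂, Matrix.toBlocks₂₁, Matrix.toBlocks₁₂,
          Matrix.mul_apply, Fin.sum_univ_one, Matrix.of_apply, hN, Matrix.submatrix_apply, hB']
        rw [hdiag]
        have hC : M (e (Sum.inr i)) i0 = -B (e (Sum.inr i)) i0 := by
          simp [hM, Matrix.sub_apply, Matrix.one_apply_ne hne1]
        have hBb : M i0 (e (Sum.inr j)) = -B i0 (e (Sum.inr j)) := by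
          simp [hM, Matrix.sub_apply, Matrix.one_apply_ne hne2]
        rw [hC, hBb, hx]
        ring
      obtain ⟨ε', hε'⟩ : ∃ y : ℝ, y = ε / (1 - ε) := ⟨_, rfl⟩
      have hB'bound : ∀ i j, |B' i j| ≤ ε' := by
        intro i j
        have h1 := hB (e (Sum.inr i)) (e (Sum.inr j))
        have h2 := hB (e (Sum.inr i)) i0
        have h3 := hB i0 (e (Sum.inr j))
        have : |B' i j| ≤ ε + ε * x * ε := by
          simp only [hB', Matrix.of_apply]
          calc |B (e (Sum.inr i)) (e (Sum.inr j))
              + B (e (Sum.inr i)) i0 * x * B i0 (e (Sum.inr j))|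
              ≤ |B (e (Sum.inr i)) (e (Sum.inr j))|
                + |B (e (Sum.inr i)) i0| * x * |B i0 (e (Sum.inr j))| := by
                have := abs_add_le (B (e (Sum.inr i)) (e (Sum.inr j)))
                  (B (e (Sum.inr i)) i0 * x * B i0 (e (Sum.inr j)))
                rw [abs_mul, abs_mul, abs_of_pos hxpos] at this
                exact this
            _ ≤ ε + ε * x * ε := by
                have hxn := hxpos.le
                have hm : |B (e (Sum.inr i)) i0| * x * |B i0 (e (Sum.inr j))| ≤ ε * x * ε :=
                  mul_le_mul (mul_le_mul_of_nonneg_right h2 hxn) h3 (abs_nonneg _)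
                    (by positivity)
                linarith
        refine this.trans ?_
        have h1ε : (1:ℝ) - ε ≠ 0 := by linarith
        have : ε * x * ε ≤ ε * (1 - ε)⁻¹ * ε :=
          mul_le_mul_of_nonneg_right (mul_le_mul_of_nonneg_left hxle hε0) hε0
        have hmc : (1 - ε) * (1 - ε)⁻¹ = 1 := mul_inv_cancel₀ h1ε
        have heq : ε' = ε + ε * (1 - ε)⁻¹ * ε := by
          rw [hε', div_eq_mul_inv]; linear_combination ε * hmc
        linarith
      have hnε' : (n : ℝ) * ε' ≤ 1 := by
        rw [hε', ← mul_div_assoc, div_le_one (by linarith : (0:ℝ) < 1 - ε)]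
        push_cast at hnε; linarith
      have hdet' := ih ε' B' hB'bound hnε'
      have hdetM : M.det = (1 - B i0 i0) * (1 - B').det := by
        rw [← Matrix.det_submatrix_equiv_self e M, ← hN,
          ← Matrix.fromBlocks_toBlocks N, Matrix.det_fromBlocks₁₁, hdetA, hSchur]
      rw [hM] at hdetM ⊢
      rw [hdetM]
      have hdnn : 0 ≤ (1 - B').det := le_trans (by nlinarith) hdet'
      have step1 : (1 - ε) * (1 - B').det ≤ (1 - B i0 i0) * (1 - B').det :=
        mul_le_mul_of_nonneg_right haval hdnn
      have step2 : (1 - ε) * (1 - (n:ℝ) * ε') ≤ (1 - ε) * (1 - B').det :=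
        mul_le_mul_of_nonneg_left hdet' (by linarith)
      have key : (1 - ε) * (1 - (n:ℝ) * ε') = 1 - ((n:ℝ)+1) * ε := by
        have h1ε : (1:ℝ) - ε ≠ 0 := by linarith
        have hmc : (1 - ε) * (1 - ε)⁻¹ = 1 := mul_inv_cancel₀ h1ε
        rw [hε', div_eq_mul_inv]; linear_combination (-((n:ℝ) * ε)) * hmc
      push_cast
      calc 1 - ((n:ℝ)+1) * ε = (1 - ε) * (1 - (n:ℝ) * ε') := key.symm
        _ ≤ (1 - ε) * (1 - B').det := step2
        _ ≤ (1 - B i0 i0) * (1 - B').det := step1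

theorem stmt_0 (n : ℕ) (hn : 0 < n) (A E : Matrix (Fin n) (Fin n) ℝ) (ε : ℝ)
    (hA : A = 1 - E) (hE : ∀ i j, |E i j| ≤ ε) (hε : ε ≤ 1 / n) :
    A.det ≥ 1 - n * ε := by
  subst hA
  have hn' : (0:ℝ) < n := by exact_mod_cast hn
  have h3 : (n:ℝ) * ε ≤ (n:ℝ) * (1 / n) := mul_le_mul_of_nonneg_left hε hn'.le
  have h4 : (n:ℝ) * (1 / n) = 1 := by field_simp
  exact ostrowski_key n ε E hE (by linarith)
end

section
/- Let φ(x) = x + Σ_{i=1}^{N} w_i k(x, c_i) where k is a Gaussian kernel with isotropic bandwidth σ, w_i ∈ ℝⁿ are weight vectors, and c_i ∈ ℝⁿ centers. If each component |w_{i,j}| < σ e^{1/2}/(nN) for all i, j, then the Jacobian of φ has positive determinant at every point x ∈ ℝⁿ. -/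
set_option synthInstance.maxHeartbeats 1000000
set_option maxHeartbeats 1000000

/-- Key scalar inequality: `t ↦ t e^{-t²/(2σ²)}` is maximized at `t = σ`. -/
lemma key_exp_bound (σ t : ℝ) (hσ : 0 < σ) (ht : 0 ≤ t) :
    Real.exp (-t ^ 2 / (2 * σ ^ 2)) / σ ^ 2 * t ≤ Real.exp (-(1 / 2 : ℝ)) / σ := by
  have ha : (0:ℝ) < Real.exp (-t ^ 2 / (2 * σ ^ 2)) := Real.exp_pos _
  have hmul : Real.exp (-t ^ 2 / (2 * σ ^ 2)) * Real.exp (t ^ 2 / (2 * σ ^ 2) - 1 / 2)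
      = Real.exp (-(1 / 2 : ℝ)) := by
    rw [← Real.exp_add]; ring_nf
  have he : t ^ 2 / (2 * σ ^ 2) + 1 / 2 ≤ Real.exp (t ^ 2 / (2 * σ ^ 2) - 1 / 2) := by
    have := Real.add_one_le_exp (t ^ 2 / (2 * σ ^ 2) - 1 / 2); linarith
  have hσ2 : (0:ℝ) < σ ^ 2 := by positivity
  rw [div_mul_eq_mul_div, div_le_div_iff₀ hσ2 hσ, ← hmul]
  have h1 : t * σ ≤ (t ^ 2 / (2 * σ ^ 2) + 1 / 2) * σ ^ 2 := by
    have h := sq_nonneg (t - σ)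
    have h2 : (t ^ 2 / (2 * σ ^ 2) + 1 / 2) * σ ^ 2 = t ^ 2 / 2 + σ ^ 2 / 2 := by
      field_simp
    nlinarith
  calc Real.exp (-t ^ 2 / (2 * σ ^ 2)) * t * σ
      = Real.exp (-t ^ 2 / (2 * σ ^ 2)) * (t * σ) := by ring
    _ ≤ Real.exp (-t ^ 2 / (2 * σ ^ 2)) * ((t ^ 2 / (2 * σ ^ 2) + 1 / 2) * σ ^ 2) :=
        mul_le_mul_of_nonneg_left h1 ha.le
    _ ≤ Real.exp (-t ^ 2 / (2 * σ ^ 2)) * (Real.exp (t ^ 2 / (2 * σ ^ 2) - 1 / 2) * σ ^ 2) :=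
        mul_le_mul_of_nonneg_left (mul_le_mul_of_nonneg_right he hσ2.le) ha.le
    _ = Real.exp (-t ^ 2 / (2 * σ ^ 2)) * Real.exp (t ^ 2 / (2 * σ ^ 2) - 1 / 2) * σ ^ 2 := by
        ring

/-- A continuous linear endomorphism that is a unit has nonzero determinant. -/
lemma det_ne_zero_of_isUnit {E : Type*} [NormedAddCommGroup E] [NormedSpace ℝ E]
    (f : E →L[ℝ] E) (hf : IsUnit f) : f.det ≠ 0 := by
  obtain ⟨u, rfl⟩ := hf
  have h1 : ((u * u⁻¹ : (E →L[ℝ] E)ˣ) : E →L[ℝ] E).det = 1 := by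
    rw [mul_inv_cancel u]
    simp [ContinuousLinearMap.det, ContinuousLinearMap.one_def, ContinuousLinearMap.coe_id]
  rw [Units.val_mul] at h1
  have h2 : ((u : E →L[ℝ] E) * (↑u⁻¹ : E →L[ℝ] E)).det
      = (u : E →L[ℝ] E).det * (↑u⁻¹ : E →L[ℝ] E).det := by
    simp only [ContinuousLinearMap.det, ContinuousLinearMap.coe_mul]
    exact map_mul LinearMap.det _ _
  rw [h2] at h1
  exact left_ne_zero_of_mul_eq_one h1

theorem stmt_5 (n N : ℕ) (hn : 0 < n) (hN : 0 < N) (σ : ℝ) (hσ : 0 < σ)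
    (w c : Fin N → EuclideanSpace ℝ (Fin n))
    (hw : ∀ i j, |w i j| < σ * Real.exp (1 / 2) / (n * N))
    (φ : EuclideanSpace ℝ (Fin n) → EuclideanSpace ℝ (Fin n))
    (hφ : φ = fun x => x + ∑ i, Real.exp (-‖x - c i‖ ^ 2 / (2 * σ ^ 2)) • w i) :
    ∀ x, 0 < (fderiv ℝ φ x).det := by
  subst hφ
  intro x
  set α : Fin N → ℝ := fun i => Real.exp (-‖x - c i‖ ^ 2 / (2 * σ ^ 2)) with hα
  set D : Fin N → (EuclideanSpace ℝ (Fin n) →L[ℝ] ℝ) :=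
    fun i => (-(α i / σ ^ 2)) • innerSL ℝ (x - c i) with hD
  set A : EuclideanSpace ℝ (Fin n) →L[ℝ] EuclideanSpace ℝ (Fin n) :=
    ∑ i, (D i).smulRight (w i) with hA
  set b : ℝ := σ * Real.exp (1 / 2) / (n * N) with hb
  have hbpos : 0 < b := by positivity
  -- the derivative
  have hder : HasFDerivAt
      (fun y : EuclideanSpace ℝ (Fin n) =>
        y + ∑ i, Real.exp (-‖y - c i‖ ^ 2 / (2 * σ ^ 2)) • w i)
      (ContinuousLinearMap.id ℝ (EuclideanSpace ℝ (Fin n)) + A) x := by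
    refine (hasFDerivAt_id x).add (HasFDerivAt.fun_sum fun i _ => ?_)
    have h1 : HasFDerivAt (fun y : EuclideanSpace ℝ (Fin n) => ‖y - c i‖ ^ 2)
        (2 • (innerSL ℝ (x - c i)).comp
          (ContinuousLinearMap.id ℝ (EuclideanSpace ℝ (Fin n)))) x := by
      simpa using ((hasFDerivAt_id x).sub_const (c i)).norm_sq
    have hfun : (fun y : EuclideanSpace ℝ (Fin n) =>
          Real.exp (-‖y - c i‖ ^ 2 / (2 * σ ^ 2)) • w i)
        = fun y : EuclideanSpace ℝ (Fin n) =>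
          Real.exp (-‖y - c i‖ ^ 2 * (2 * σ ^ 2)⁻¹) • w i := by
      funext y; rw [div_eq_mul_inv]
    rw [hfun]
    have h2 := ((h1.neg.mul_const ((2 * σ ^ 2)⁻¹)).exp).smul_const (w i)
    refine h2.congr_fderiv ?_
    ext v
    simp [hD, hα, div_eq_mul_inv]
    left; ring
  -- bound on `D i`
  have key := fun (t : ℝ) (ht : 0 ≤ t) => key_exp_bound σ t hσ ht
  have hDnorm : ∀ i, ‖D i‖ ≤ Real.exp (-(1 / 2 : ℝ)) / σ := by
    intro i
    show ‖(-(α i / σ ^ 2)) • innerSL ℝ (x - c i)‖ ≤ _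
    rw [norm_smul (-(α i / σ ^ 2)) (innerSL ℝ (x - c i)), innerSL_apply_norm]
    have hαpos : 0 < α i := Real.exp_pos _
    rw [Real.norm_eq_abs, abs_neg, abs_of_pos (by positivity : 0 < α i / σ ^ 2)]
    calc α i / σ ^ 2 * ‖x - c i‖
        = Real.exp (-‖x - c i‖ ^ 2 / (2 * σ ^ 2)) / σ ^ 2 * ‖x - c i‖ := by rw [hα]
      _ ≤ Real.exp (-(1 / 2 : ℝ)) / σ := key ‖x - c i‖ (norm_nonneg _)
  -- bound on `w i`
  have hwnorm : ∀ i, ‖w i‖ < n * b := by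
    intro i
    have h1 : ‖w i‖ ≤ ∑ j, |w i j| := by
      rw [EuclideanSpace.norm_eq]
      have h2 : ∑ j, ‖w i j‖ ^ 2 ≤ (∑ j, ‖w i j‖) ^ 2 :=
        Finset.sum_sq_le_sq_sum_of_nonneg (fun j _ => norm_nonneg _)
      calc Real.sqrt (∑ j, ‖w i j‖ ^ 2) ≤ Real.sqrt ((∑ j, ‖w i j‖) ^ 2) :=
            Real.sqrt_le_sqrt h2
        _ = ∑ j, ‖w i j‖ := by
            rw [Real.sqrt_sq (Finset.sum_nonneg fun j _ => norm_nonneg _)]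
        _ = ∑ j, |w i j| := by simp [Real.norm_eq_abs]
    have hne : (Finset.univ : Finset (Fin n)).Nonempty := ⟨⟨0, hn⟩, Finset.mem_univ _⟩
    have h3 : ∑ j, |w i j| < ∑ _j : Fin n, b :=
      Finset.sum_lt_sum_of_nonempty hne (fun j _ => hw i j)
    have h4 : ∑ _j : Fin n, b = n * b := by
      rw [Finset.sum_const, Finset.card_univ, Fintype.card_fin, nsmul_eq_mul]
    linarith
  -- the perturbation is a contraction
  have hAnorm : ‖A‖ < 1 := by
    have hterm : ∀ i : Fin N,
        ‖(D i).smulRight (w i)‖ < Real.exp (-(1/2:ℝ)) / σ * (n * b) := by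
      intro i
      rw [ContinuousLinearMap.norm_smulRight_apply]
      have hc : (0:ℝ) < Real.exp (-(1/2:ℝ)) / σ := by positivity
      calc ‖D i‖ * ‖w i‖ ≤ Real.exp (-(1/2:ℝ)) / σ * ‖w i‖ :=
            mul_le_mul_of_nonneg_right (hDnorm i) (norm_nonneg _)
        _ < Real.exp (-(1/2:ℝ)) / σ * (n * b) := (mul_lt_mul_iff_right₀ hc).mpr (hwnorm i)
    have h5 : ‖A‖ ≤ ∑ i, ‖(D i).smulRight (w i)‖ := norm_sum_le _ _
    have h6 : ∑ i, ‖(D i).smulRight (w i)‖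
        < ∑ _i : Fin N, Real.exp (-(1/2:ℝ)) / σ * (n * b) :=
      Finset.sum_lt_sum_of_nonempty ⟨⟨0, hN⟩, Finset.mem_univ _⟩ (fun i _ => hterm i)
    have h7 : ∑ _i : Fin N, Real.exp (-(1/2:ℝ)) / σ * (n * b) = 1 := by
      rw [Finset.sum_const, Finset.card_univ, Fintype.card_fin, nsmul_eq_mul, hb]
      rw [Real.exp_neg]
      have hn' : (0:ℝ) < n := by exact_mod_cast hn
      have hN' : (0:ℝ) < N := by exact_mod_cast hN
      have := Real.exp_pos (1/2:ℝ)
      field_simp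
    linarith
  rw [hder.fderiv]
  -- homotopy argument: the determinant never vanishes on the segment
  set F : ℝ → ℝ := fun t =>
    (ContinuousLinearMap.id ℝ (EuclideanSpace ℝ (Fin n)) + t • A).det with hF
  have hcont : Continuous F := by
    apply ContinuousLinearMap.continuous_det.comp
    continuity
  have hne : ∀ t ∈ Set.Icc (0:ℝ) 1, F t ≠ 0 := by
    intro t ht
    apply det_ne_zero_of_isUnit
    have hnorm : ‖-(t • A)‖ < 1 := by
      rw [norm_neg, norm_smul t A]
      have h8 : ‖t‖ ≤ 1 := by
        rw [Real.norm_eq_abs, abs_of_nonneg ht.1]; exact ht.2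
      calc ‖t‖ * ‖A‖ ≤ 1 * ‖A‖ := mul_le_mul_of_nonneg_right h8 (norm_nonneg _)
        _ = ‖A‖ := one_mul _
        _ < 1 := hAnorm
    have hu := (Units.oneSub (-(t • A)) hnorm).isUnit
    rw [Units.val_oneSub, sub_neg_eq_add] at hu
    simpa [ContinuousLinearMap.one_def] using hu
  have hF0 : F 0 = 1 := by
    simp [hF, ContinuousLinearMap.det, ContinuousLinearMap.coe_id]
  by_contra hle
  push_neg at hle
  have hle1 : F 1 ≤ 0 := by
    have : F 1 = (ContinuousLinearMap.id ℝ (EuclideanSpace ℝ (Fin n)) + A).det := by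
      rw [hF]; simp
    rw [this]; exact hle
  have hmem : (0:ℝ) ∈ Set.Icc (F 1) (F 0) := ⟨hle1, by rw [hF0]; norm_num⟩
  obtain ⟨t, ht, hFt⟩ :=
    intermediate_value_Icc' (by norm_num : (0:ℝ) ≤ 1) hcont.continuousOn hmem
  exact hne t ht hFt
end

section
/- Let k(x,c) = exp(-½ (x-c)ᵀ Σ⁻¹ (x-c)) be a multivariate Gaussian kernel with symmetric positive-definite covariance Σ, and let Σ⁻¹ = Q D Qᵀ be its eigendecomposition with Q orthogonal and D diagonal positive. Then for each coordinate j and all x, |∂k/∂x_j (x,c)| ≤ Σ_{l=1}^{n} |Q_{j,l}| e^{-1/2} √(D_{l,l}). -/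
open Matrix

-- scalar lemma
lemma key_scalar (d t : ℝ) (hd : 0 < d) :
    d * |t| * Real.exp (-(1/2) * (d * t^2)) ≤ Real.exp (-(1/2)) * Real.sqrt d := by
  set u := Real.sqrt d * t with hu
  have hsd : 0 < Real.sqrt d := Real.sqrt_pos.2 hd
  have h1 : d * |t| = Real.sqrt d * |u| := by
    rw [hu, abs_mul, abs_of_pos hsd, ← mul_assoc, Real.mul_self_sqrt hd.le]
  have h2 : d * t^2 = u^2 := by
    rw [hu, mul_pow, Real.sq_sqrt hd.le]
  have h3 : |u| * Real.exp (-(1/2) * u^2) ≤ Real.exp (-(1/2)) := by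
    have habs : |u| ≤ Real.exp ((u^2 - 1)/2) := by
      have := Real.add_one_le_exp ((u^2 - 1)/2)
      nlinarith [sq_nonneg (|u| - 1), sq_abs u]
    calc |u| * Real.exp (-(1/2) * u^2) ≤ Real.exp ((u^2-1)/2) * Real.exp (-(1/2) * u^2) := by
          exact mul_le_mul_of_nonneg_right habs (Real.exp_pos _).le
      _ = Real.exp (-(1/2)) := by rw [← Real.exp_add]; ring_nf
  calc d * |t| * Real.exp (-(1/2) * (d * t^2))
      = Real.sqrt d * (|u| * Real.exp (-(1/2) * u^2)) := by rw [h1, h2]; ring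
    _ ≤ Real.sqrt d * Real.exp (-(1/2)) := by
        exact mul_le_mul_of_nonneg_left h3 hsd.le
    _ = Real.exp (-(1/2)) * Real.sqrt d := mul_comm _ _

theorem stmt_12 (n : ℕ) (S Q : Matrix (Fin n) (Fin n) ℝ) (d : Fin n → ℝ)
    (hS : S.PosDef) (hQ : Qᵀ * Q = 1) (hd : ∀ l, 0 < d l)
    (hdecomp : S⁻¹ = Q * Matrix.diagonal d * Qᵀ)
    (c : Fin n → ℝ) (k : (Fin n → ℝ) → ℝ)
    (hk : k = fun x => Real.exp (-(1 / 2) * ((x - c) ⬝ᵥ S⁻¹.mulVec (x - c))))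
    (j : Fin n) :
    ∀ x, |fderiv ℝ k x (Pi.single j 1)| ≤
      ∑ l, |Q j l| * Real.exp (-(1 / 2)) * Real.sqrt (d l) := by
  intro x
  set A := S⁻¹ with hA
  have hAsymm : Aᵀ = A := by
    rw [hdecomp]
    simp [Matrix.transpose_mul, Matrix.mul_assoc]
  -- bilinear CLM
  let B₀ : (Fin n → ℝ) →ₗ[ℝ] (Fin n → ℝ) →ₗ[ℝ] ℝ :=
    LinearMap.mk₂ ℝ (fun u w => u ⬝ᵥ A.mulVec w)
      (fun u₁ u₂ w => by simp [add_dotProduct])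
      (fun r u w => by simp [smul_dotProduct])
      (fun u w₁ w₂ => by simp [Matrix.mulVec_add, dotProduct_add])
      (fun r u w => by simp [Matrix.mulVec_smul, dotProduct_smul])
  let B₁ : (Fin n → ℝ) →ₗ[ℝ] (Fin n → ℝ) →L[ℝ] ℝ :=
    { toFun := fun u => LinearMap.toContinuousLinearMap (B₀ u)
      map_add' := fun u₁ u₂ => by ext w; simp
      map_smul' := fun r u => by ext w; simp }
  let B : (Fin n → ℝ) →L[ℝ] (Fin n → ℝ) →L[ℝ] ℝ :=
    LinearMap.toContinuousLinearMap B₁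
  have hBapp : ∀ u w, B u w = u ⬝ᵥ A.mulVec w := fun u w => rfl
  have hBbil : IsBoundedBilinearMap ℝ (fun p : (Fin n → ℝ) × (Fin n → ℝ) => B p.1 p.2) :=
    B.isBoundedBilinearMap
  set v : Fin n → ℝ := x - c with hv
  have hsub : HasFDerivAt (fun y : Fin n → ℝ => (y - c, y - c))
      ((ContinuousLinearMap.id ℝ (Fin n → ℝ)).prod (ContinuousLinearMap.id ℝ (Fin n → ℝ))) x :=
    HasFDerivAt.prodMk ((hasFDerivAt_id x).sub_const c) ((hasFDerivAt_id x).sub_const c)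
  have hg : HasFDerivAt (fun y : Fin n → ℝ => (y - c) ⬝ᵥ A.mulVec (y - c))
      ((hBbil.deriv (v, v)).comp
        ((ContinuousLinearMap.id ℝ (Fin n → ℝ)).prod (ContinuousLinearMap.id ℝ (Fin n → ℝ)))) x :=
    by have := (hBbil.hasFDerivAt (v, v)).comp x hsub; exact this
  set g : (Fin n → ℝ) → ℝ := fun y => (y - c) ⬝ᵥ A.mulVec (y - c) with hgdef
  have hk' : HasFDerivAt k
      (Real.exp (-(1/2) * g x) • ((-(1/2) : ℝ) •
        ((hBbil.deriv (v, v)).comp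
          ((ContinuousLinearMap.id ℝ (Fin n → ℝ)).prod (ContinuousLinearMap.id ℝ (Fin n → ℝ)))))) x := by
    rw [hk]
    exact (hg.const_mul (-(1/2) : ℝ)).exp
  have hfd := hk'.fderiv
  rw [hfd]
  set w : Fin n → ℝ := A.mulVec v with hw
  set z : Fin n → ℝ := Qᵀ *ᵥ v with hz
  have hzd : Matrix.diagonal d *ᵥ z = fun i => d i * z i := by
    ext i; simp [Matrix.mulVec_diagonal]
  have hwQ : w = Q *ᵥ (fun i => d i * z i) := by
    rw [hw, hdecomp, ← Matrix.mulVec_mulVec, ← Matrix.mulVec_mulVec, hz, hzd]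
  have hwj : w j = ∑ l, Q j l * (d l * z l) := by
    rw [hwQ]; rfl
  have hgx : g x = ∑ m, d m * z m ^ 2 := by
    have : g x = v ⬝ᵥ w := rfl
    rw [this, hwQ, Matrix.dotProduct_mulVec, ← Matrix.mulVec_transpose, ← hz]
    simp [dotProduct]
    apply Finset.sum_congr rfl
    intro m _
    ring
  have heval : (Real.exp (-(1/2) * g x) • ((-(1/2) : ℝ) •
        ((hBbil.deriv (v, v)).comp
          ((ContinuousLinearMap.id ℝ (Fin n → ℝ)).prod (ContinuousLinearMap.id ℝ (Fin n → ℝ))))))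
        (Pi.single j 1) = Real.exp (-(1/2) * g x) * (-(w j)) := by
    simp only [ContinuousLinearMap.smul_apply, ContinuousLinearMap.comp_apply,
      ContinuousLinearMap.prod_apply, ContinuousLinearMap.coe_id', id_eq,
      IsBoundedBilinearMap.deriv_apply, smul_eq_mul]
    have e1 : B (Pi.single j 1) v = w j := by
      rw [hBapp, single_dotProduct, one_mul, hw]
    have e2 : B v (Pi.single j 1) = w j := by
      rw [hBapp, Matrix.dotProduct_mulVec, ← hAsymm, Matrix.vecMul_transpose,
        dotProduct_single, mul_one, hw]
    rw [e1, e2]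
    ring
  rw [heval, abs_mul, abs_neg, abs_of_pos (Real.exp_pos _)]
  calc Real.exp (-(1/2) * g x) * |w j|
      ≤ Real.exp (-(1/2) * g x) * ∑ l, |Q j l * (d l * z l)| := by
        apply mul_le_mul_of_nonneg_left _ (Real.exp_pos _).le
        rw [hwj]
        exact Finset.abs_sum_le_sum_abs _ _
    _ = ∑ l, |Q j l| * (d l * |z l| * Real.exp (-(1/2) * g x)) := by
        rw [Finset.mul_sum]
        apply Finset.sum_congr rfl
        intro l _
        rw [abs_mul, abs_mul, abs_of_pos (hd l)]
        ring
    _ ≤ ∑ l, |Q j l| * Real.exp (-(1/2)) * Real.sqrt (d l) := by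
        apply Finset.sum_le_sum
        intro l _
        have hexp : Real.exp (-(1/2) * g x) ≤ Real.exp (-(1/2) * (d l * z l ^ 2)) := by
          apply Real.exp_le_exp.2
          rw [hgx]
          have hle : d l * z l ^ 2 ≤ ∑ m, d m * z m ^ 2 :=
            Finset.single_le_sum (f := fun m => d m * z m ^ 2)
              (fun m _ => mul_nonneg (hd m).le (sq_nonneg _)) (Finset.mem_univ l)
          nlinarith
        calc |Q j l| * (d l * |z l| * Real.exp (-(1/2) * g x))
            ≤ |Q j l| * (d l * |z l| * Real.exp (-(1/2) * (d l * z l ^ 2))) := by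
              apply mul_le_mul_of_nonneg_left _ (abs_nonneg _)
              exact mul_le_mul_of_nonneg_left hexp
                (mul_nonneg (hd l).le (abs_nonneg _))
          _ ≤ |Q j l| * (Real.exp (-(1/2)) * Real.sqrt (d l)) := by
              apply mul_le_mul_of_nonneg_left _ (abs_nonneg _)
              have := key_scalar (d l) (z l) (hd l)
              linarith
          _ = |Q j l| * Real.exp (-(1/2)) * Real.sqrt (d l) := by ring
end
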